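/- For any formal differential operator L = d^n/dx^n + Σ_{i=0}^{n-2} u_i(x) d^i/dx^i with formal power series coefficients u_i, and any fixed base point x_0, there exists a unique formal solution ψ(x,k) = (Σ_{s=0}^∞ ξ_s(x) k^{-s}) e^{k(x-x_0)} of the equation Lψ = k^n ψ (as an identity of formal series in k^{-1} times the exponential) satisfying the normalization ξ_0 ≡ 1 and ξ_s(x_0) = 0 for all s ≥ 1. -/

import Mathlib

open scoped BigOperators

/-- Extension of a one-sided sequence of coefficient functions `ξ_s`, `s ∈ ℕ`, to
`ℤ`-indexed Laurent coefficients (in the variable `k⁻¹`), zero in negative degrees. -/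
noncomputable def extSeq (ξ : ℕ → ℂ → ℂ) : ℤ → ℂ → ℂ :=
  fun s => if 0 ≤ s then ξ s.toNat else 0

/-- The operation corresponding to `d/dx` acting on a series
`Σ_s η_s(x) k^{-s} e^{k(x-x₀)}`, recorded on the `ℤ`-indexed coefficients, via
`d/dx (η_s k^{-s} e^{k(x-x₀)}) = (η_s' + k·η_s) k^{-s} e^{k(x-x₀)}`. -/
noncomputable def seriesDeriv (η : ℤ → ℂ → ℂ) : ℤ → ℂ → ℂ :=
  fun s x => deriv (η s) x + η (s + 1) x

/-- The `ℤ`-indexed coefficients of `L(Σ η_s k^{-s} e^{k(x-x₀)})` for the canonical-form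
operator `L = d^n/dx^n + Σ_{i=0}^{n-2} u_i(x) d^i/dx^i`. -/
noncomputable def applyL (n : ℕ) (u : ℕ → ℂ → ℂ) (η : ℤ → ℂ → ℂ) : ℤ → ℂ → ℂ :=
  fun s x => (seriesDeriv^[n] η) s x +
    ∑ i ∈ Finset.range (n - 1), u i x * (seriesDeriv^[i] η) s x

/-- For any formal differential operator `L = d^n/dx^n + Σ_{i=0}^{n-2} u_i(x) d^i/dx^i`
and any base point `x₀`, there exists a unique normalized formal solution
`ψ(x,k) = (Σ_{s≥0} ξ_s(x) k^{-s}) e^{k(x-x₀)}` of `Lψ = k^n ψ` (the equation being read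
coefficientwise in powers of `k`), with `ξ_0 ≡ 1` and `ξ_s(x₀) = 0` for `s ≥ 1`. -/
lemma deriv_entire {f : ℂ → ℂ} (hf : Differentiable ℂ f) : Differentiable ℂ (deriv f) := by
  have h := (hf.differentiableOn.analyticOnNhd isOpen_univ).deriv
  intro x; exact (h x (Set.mem_univ x)).differentiableAt

def EntZ (η : ℤ → ℂ → ℂ) : Prop := ∀ t, Differentiable ℂ (η t)

lemma entz_seriesDeriv {η : ℤ → ℂ → ℂ} (h : EntZ η) : EntZ (seriesDeriv η) := by
  intro t
  exact (deriv_entire (h t)).add (h (t + 1))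

lemma entz_iter {η : ℤ → ℂ → ℂ} (h : EntZ η) (m : ℕ) : EntZ (seriesDeriv^[m] η) := by
  induction m with
  | zero => exact h
  | succ m ih => rw [Function.iterate_succ_apply']; exact entz_seriesDeriv ih

lemma iter_add {α β : ℤ → ℂ → ℂ} (hα : EntZ α) (hβ : EntZ β) (m : ℕ) :
    seriesDeriv^[m] (fun t x => α t x + β t x)
      = fun t x => seriesDeriv^[m] α t x + seriesDeriv^[m] β t x := by
  induction m with
  | zero => rfl
  | succ m ih =>
      rw [Function.iterate_succ_apply', Function.iterate_succ_apply',
        Function.iterate_succ_apply', ih]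
      funext t x
      show deriv (fun x => seriesDeriv^[m] α t x + seriesDeriv^[m] β t x) x
          + (seriesDeriv^[m] α (t+1) x + seriesDeriv^[m] β (t+1) x) = _
      rw [deriv_fun_add ((entz_iter hα m t).differentiableAt) ((entz_iter hβ m t).differentiableAt)]
      show _ = (deriv (seriesDeriv^[m] α t) x + seriesDeriv^[m] α (t+1) x)
          + (deriv (seriesDeriv^[m] β t) x + seriesDeriv^[m] β (t+1) x)
      ring

lemma iter_low {η : ℤ → ℂ → ℂ} {c : ℤ} (h0 : ∀ t, t < c → η t = fun _ => 0) :
    ∀ (m : ℕ) (s : ℤ), s + m ≤ c → seriesDeriv^[m] η s = η (s + m) := by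
  intro m
  induction m with
  | zero => intro s _; simp
  | succ m ih =>
      intro s hs
      rw [Function.iterate_succ_apply']
      have h1 : seriesDeriv^[m] η s = η (s + m) := ih s (by omega)
      have h2 : seriesDeriv^[m] η (s + 1) = η (s + 1 + m) := ih (s + 1) (by omega)
      have h3 : η (s + m) = fun _ => 0 := h0 _ (by omega)
      funext x
      show deriv (seriesDeriv^[m] η s) x + seriesDeriv^[m] η (s + 1) x = _
      rw [h1, h2, h3]
      have h4 : s + 1 + (m : ℤ) = s + ((m : ℕ) + 1 : ℕ) := by push_cast; ring
      rw [h4]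
      simp

lemma iter_edge {η : ℤ → ℂ → ℂ} {c : ℤ} (h0 : ∀ t, t < c → η t = fun _ => 0) :
    ∀ (m : ℕ) (s : ℤ), s + m = c + 1 →
      seriesDeriv^[m] η s = fun x => η (c + 1) x + (m : ℂ) * deriv (η c) x := by
  intro m
  induction m with
  | zero =>
      intro s hs
      have : s = c + 1 := by omega
      subst this
      funext x; simp
  | succ m ih =>
      intro s hs
      rw [Function.iterate_succ_apply']
      have h1 : seriesDeriv^[m] η s = η c := by
        have e : s + (m:ℤ) = c := by omega
        rw [iter_low h0 m s (by omega), e]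
      have h2 : seriesDeriv^[m] η (s + 1) = fun x => η (c + 1) x + (m : ℂ) * deriv (η c) x :=
        ih (s + 1) (by omega)
      funext x
      show deriv (seriesDeriv^[m] η s) x + seriesDeriv^[m] η (s + 1) x = _
      rw [h1, h2]
      push_cast
      ring

lemma iter_zeroFam (m : ℕ) (s : ℤ) :
    seriesDeriv^[m] (fun _ _ => (0:ℂ)) s = fun _ => 0 :=
  iter_low (c := s + m + 1) (fun _ _ => rfl) m s (by omega)

open scoped Nat

theorem exists_primitive (f : ℂ → ℂ) (hf : Differentiable ℂ f) (x0 : ℂ) :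
    ∃ g : ℂ → ℂ, Differentiable ℂ g ∧ (∀ x, deriv g x = f x) ∧ g x0 = 0 := by
  classical
  set a : ℕ → ℂ := fun n => (n ! : ℂ)⁻¹ * iteratedDeriv n f x0 with ha
  have hA : ∀ z : ℂ, HasSum (fun n => a n * (z - x0) ^ n) (f z) := by
    intro z
    have := Complex.hasSum_taylorSeries_of_entire hf x0 z
    convert this using 2 with n
    · rfl
    simp [ha, smul_eq_mul]; ring
  set F : ℕ → ℂ → ℂ := fun n w => (a n / (n + 1)) * (w - x0) ^ (n + 1) with hF
  set g : ℂ → ℂ := fun z => ∑' n, F n z with hg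
  have hFd : ∀ n, Differentiable ℂ (F n) := by
    intro n
    exact ((differentiable_id.sub_const x0).pow (n + 1)).const_mul _
  have hFderiv : ∀ n (w : ℂ), HasDerivAt (F n) (a n * (w - x0) ^ n) w := by
    intro n w
    have h1 : HasDerivAt (fun w : ℂ => (w - x0) ^ (n + 1))
        ((n + 1 : ℕ) * (w - x0) ^ n * 1) w := by
      simpa using (((hasDerivAt_id w).sub_const x0).fun_pow (n + 1))
    have h2 := h1.const_mul (a n / (n + 1))
    convert h2 using 1
    have hne : ((n : ℂ) + 1) ≠ 0 := Nat.cast_add_one_ne_zero n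
    · rfl
    · rfl
    push_cast
    field_simp
  -- main local analysis
  have main : ∀ z : ℂ, DifferentiableAt ℂ g z ∧ deriv g z = f z := by
    intro z
    set R : ℝ := ‖z - x0‖ + 1 with hR
    have hR0 : 0 < R := by positivity
    set U : Set ℂ := Metric.ball x0 R with hU
    have hzU : z ∈ U := by
      rw [hU, Metric.mem_ball, dist_eq_norm, hR]
      linarith
    set u : ℕ → ℝ := fun n => ‖a n‖ * R ^ (n + 1) with hu
    have hsum2 : Summable (fun n => ‖a n‖ * (2 * R) ^ n) := by
      have h := (hA (x0 + 2 * R)).summable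
      have h' := h.norm
      have hval : (x0 + 2 * (R:ℂ) - x0) = ((2 * R : ℝ) : ℂ) := by push_cast; ring
      have h'' : (fun n => ‖a n * (x0 + 2 * (R:ℂ) - x0) ^ n‖)
          = fun n => ‖a n‖ * (2 * R) ^ n := by
        funext n
        rw [norm_mul, norm_pow, hval, Complex.norm_real, Real.norm_eq_abs,
          abs_of_nonneg (by linarith : (0:ℝ) ≤ 2 * R)]
      rwa [h''] at h'
    have husum : Summable u := by
      refine Summable.of_nonneg_of_le (fun n => ?_) (fun n => ?_) (hsum2.mul_left R)
      · show (0:ℝ) ≤ ‖a n‖ * R ^ (n + 1)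
        positivity
      show ‖a n‖ * R ^ (n + 1) ≤ R * (‖a n‖ * (2 * R) ^ n)
      have : R ^ n ≤ (2 * R) ^ n := by
        apply pow_le_pow_left₀ (le_of_lt hR0); linarith
      calc ‖a n‖ * R ^ (n + 1) = R * (‖a n‖ * R ^ n) := by ring
        _ ≤ R * (‖a n‖ * (2 * R) ^ n) := by
            apply mul_le_mul_of_nonneg_left _ (le_of_lt hR0)
            exact mul_le_mul_of_nonneg_left this (norm_nonneg _)
    have hF_le : ∀ (n : ℕ) (w : ℂ), w ∈ U → ‖F n w‖ ≤ u n := by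
      intro n w hw
      have hw' : ‖w - x0‖ ≤ R := by
        rw [hU, Metric.mem_ball, dist_eq_norm] at hw; linarith
      have h1 : ‖(a n / (n + 1))‖ ≤ ‖a n‖ := by
        rw [norm_div]
        apply div_le_self (norm_nonneg _)
        rw [show ((n:ℂ) + 1) = ((n+1 : ℕ) : ℂ) by push_cast; ring, Complex.norm_natCast]
        exact_mod_cast Nat.succ_le_succ (Nat.zero_le n)
      calc ‖F n w‖ = ‖a n / (n+1)‖ * ‖w - x0‖ ^ (n+1) := by
            simp [hF, norm_mul, norm_pow]
        _ ≤ ‖a n‖ * R ^ (n+1) := by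
            apply mul_le_mul h1 (pow_le_pow_left₀ (norm_nonneg _) hw' _)
              (by positivity) (norm_nonneg _)
    have hdiffon := Complex.differentiableOn_tsum_of_summable_norm husum
      (fun n => (hFd n).differentiableOn) Metric.isOpen_ball hF_le
    have hdat : DifferentiableAt ℂ g z :=
      (hdiffon.differentiableAt (Metric.isOpen_ball.mem_nhds hzU))
    refine ⟨hdat, ?_⟩
    have hds := Complex.hasSum_deriv_of_summable_norm husum
      (fun n => (hFd n).differentiableOn) Metric.isOpen_ball hF_le hzU
    have : HasSum (fun n => a n * (z - x0) ^ n) (deriv g z) := by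
      convert hds using 2 with n
      · rfl
      exact ((hFderiv n z).deriv).symm
    exact (this.unique (hA z))
  refine ⟨g, fun z => (main z).1, fun z => (main z).2, ?_⟩
  have : ∀ n, F n x0 = 0 := by
    intro n; simp [hF]
  simp [hg, this]


noncomputable def lowFam (ξ : ℕ → ℂ → ℂ) (c : ℤ) : ℤ → ℂ → ℂ :=
  fun t => if t < c then extSeq ξ t else fun _ => 0

lemma entz_extSeq {ξ : ℕ → ℂ → ℂ} (hξ : ∀ m, Differentiable ℂ (ξ m)) : EntZ (extSeq ξ) := by
  intro t
  unfold extSeq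
  split
  · exact hξ _
  · exact differentiable_const 0

lemma entz_lowFam {ξ : ℕ → ℂ → ℂ} (hξ : ∀ m, Differentiable ℂ (ξ m)) (c : ℤ) :
    EntZ (lowFam ξ c) := by
  intro t
  unfold lowFam
  split
  · exact entz_extSeq hξ t
  · exact differentiable_const 0

lemma key_split (n : ℕ) (u : ℕ → ℂ → ℂ) (ξ : ℕ → ℂ → ℂ)
    (hξ : ∀ m, Differentiable ℂ (ξ m)) (s : ℤ) (x : ℂ) :
    applyL n u (extSeq ξ) s x
      = extSeq ξ (s + n) x + (n : ℂ) * deriv (extSeq ξ (s + n - 1)) x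
        + applyL n u (lowFam ξ (s + n - 1)) s x := by
  set c : ℤ := s + n - 1 with hc
  set α : ℤ → ℂ → ℂ := lowFam ξ c with hαdef
  set β : ℤ → ℂ → ℂ := fun t => if t < c then (fun _ => (0:ℂ)) else extSeq ξ t with hβdef
  have hsplit : extSeq ξ = fun t x => α t x + β t x := by
    funext t x
    by_cases h : t < c <;> simp [hαdef, hβdef, lowFam, h]
  have hα : EntZ α := entz_lowFam hξ c
  have hβ : EntZ β := by
    intro t
    rw [hβdef]
    dsimp only
    split
    · exact differentiable_const 0
    · exact entz_extSeq hξ t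
  have hβ0 : ∀ t, t < c → β t = fun _ => 0 := by
    intro t ht; rw [hβdef]; simp [ht]
  have hiter : ∀ m : ℕ, seriesDeriv^[m] (extSeq ξ)
      = fun t x => seriesDeriv^[m] α t x + seriesDeriv^[m] β t x := by
    intro m; rw [hsplit]; exact iter_add hα hβ m
  have hDnβ : seriesDeriv^[n] β s = fun x => β (c + 1) x + (n : ℂ) * deriv (β c) x :=
    iter_edge hβ0 n s (by omega)
  have hβc1 : β (c + 1) = extSeq ξ (s + n) := by
    have e1 : c + 1 = s + (n:ℤ) := by omega
    rw [hβdef]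
    dsimp only
    rw [if_neg (by omega), e1]
  have hβc : β c = extSeq ξ c := by
    rw [hβdef]
    dsimp only
    rw [if_neg (by omega)]
  have hDiβ : ∀ i ∈ Finset.range (n - 1), seriesDeriv^[i] β s = fun _ => (0:ℂ) := by
    intro i hi
    rw [Finset.mem_range] at hi
    rw [iter_low hβ0 i s (by omega), hβ0 _ (by omega)]
  unfold applyL
  simp only [hiter, hDnβ, hβc1, hβc]
  have hsum : ∑ i ∈ Finset.range (n - 1),
        u i x * (seriesDeriv^[i] α s x + seriesDeriv^[i] β s x)
      = ∑ i ∈ Finset.range (n - 1), u i x * seriesDeriv^[i] α s x := by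
    refine Finset.sum_congr rfl (fun i hi => ?_)
    rw [hDiβ i hi]
    ring
  rw [hsum]
  ring

lemma applyL_zeroFam (n : ℕ) (u : ℕ → ℂ → ℂ) (s : ℤ) (x : ℂ) :
    applyL n u (fun _ _ => (0:ℂ)) s x = 0 := by
  unfold applyL
  simp only [iter_zeroFam]
  simp

lemma applyL_diff (n : ℕ) (u : ℕ → ℂ → ℂ) (hu : ∀ i, Differentiable ℂ (u i))
    {η : ℤ → ℂ → ℂ} (hη : EntZ η) (s : ℤ) :
    Differentiable ℂ (fun x => applyL n u η s x) := by
  unfold applyL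
  apply Differentiable.add
  · exact entz_iter hη n s
  · exact Differentiable.fun_sum (fun i _ => (hu i).mul (entz_iter hη i s))

open scoped Classical in
noncomputable def primFun (x0 : ℂ) (f : ℂ → ℂ) : ℂ → ℂ :=
  if h : ∃ g : ℂ → ℂ, Differentiable ℂ g ∧ (∀ x, deriv g x = f x) ∧ g x0 = 0 then h.choose
  else fun _ => 0

lemma primFun_spec {f : ℂ → ℂ} (hf : Differentiable ℂ f) (x0 : ℂ) :
    Differentiable ℂ (primFun x0 f) ∧ (∀ x, deriv (primFun x0 f) x = f x) ∧
      primFun x0 f x0 = 0 := by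
  have hex := exists_primitive f hf x0
  rw [primFun, dif_pos hex]
  exact hex.choose_spec

noncomputable def xiSeq (n : ℕ) (u : ℕ → ℂ → ℂ) (x0 : ℂ) : ℕ → ℂ → ℂ
  | 0 => fun _ => 1
  | (m + 1) =>
      primFun x0 (fun x => -(1 / (n:ℂ)) * applyL n u
        (fun t => if h : 0 ≤ t ∧ t ≤ (m:ℤ) then xiSeq n u x0 t.toNat else fun _ => 0)
        ((m:ℤ) + 2 - n) x)
  termination_by m => m
  decreasing_by simp_wf; omega

lemma eq_of_deriv_eq_of_eq_at {f g : ℂ → ℂ} (hf : Differentiable ℂ f)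
    (hg : Differentiable ℂ g) (hd : ∀ x, deriv f x = deriv g x) (x0 : ℂ)
    (h0 : f x0 = g x0) : f = g := by
  funext x
  have h1 : (fun z => f z - g z) x = (fun z => f z - g z) x0 :=
    is_const_of_deriv_eq_zero (hf.sub hg)
      (fun z => by rw [deriv_sub (hf z) (hg z), hd z, sub_self]) x x0
  dsimp at h1
  rw [h0] at h1
  have := sub_eq_sub_iff_sub_eq_sub.mp h1
  simpa [sub_eq_zero] using h1

section Main

variable (n : ℕ) (u : ℕ → ℂ → ℂ) (x0 : ℂ)

/-- The dite-truncated family used in the recursion. -/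
noncomputable def famm (ξ : ℕ → ℂ → ℂ) (m : ℕ) : ℤ → ℂ → ℂ :=
  fun t => if 0 ≤ t ∧ t ≤ (m:ℤ) then ξ t.toNat else fun _ => 0

lemma xiSeq_zero : xiSeq n u x0 0 = fun _ => 1 := by rw [xiSeq]

lemma xiSeq_succ (m : ℕ) : xiSeq n u x0 (m + 1)
    = primFun x0 (fun x => -(1 / (n:ℂ)) * applyL n u
        (famm (xiSeq n u x0) m) ((m:ℤ) + 2 - n) x) := by
  rw [xiSeq]
  congr 1

lemma famm_eq_lowFam (ξ : ℕ → ℂ → ℂ) (m : ℕ) :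
    famm ξ m = lowFam ξ ((m:ℤ) + 1) := by
  funext t
  unfold famm lowFam extSeq
  by_cases h1 : 0 ≤ t
  · by_cases h2 : t ≤ (m:ℤ)
    · rw [if_pos ⟨h1, h2⟩, if_pos (by omega), if_pos h1]
    · rw [if_neg (by omega), if_neg (by omega)]
  · rw [if_neg (by omega)]
    rw [if_pos (by omega)]  -- t < m+1 since t < 0
    rw [if_neg h1]
    rfl

lemma entz_famm {ξ : ℕ → ℂ → ℂ} (m : ℕ) (hξ : ∀ j, j ≤ m → Differentiable ℂ (ξ j)) :
    EntZ (famm ξ m) := by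
  intro t
  unfold famm
  split_ifs with h
  · exact hξ t.toNat (by omega)
  · exact differentiable_const 0

lemma lowFam_neg (ξ : ℕ → ℂ → ℂ) (c : ℤ) (hc : c ≤ 0) :
    lowFam ξ c = fun _ _ => (0:ℂ) := by
  funext t x
  unfold lowFam extSeq
  split_ifs with h1 h2
  · omega
  · rfl
  · rfl

end Main


theorem exists_unique_normalized_formal_eigenfunction
    (n : ℕ) (hn : 1 ≤ n) (u : ℕ → ℂ → ℂ) (hu : ∀ i, Differentiable ℂ (u i))
    (x0 : ℂ) :
    ∃! ξ : ℕ → ℂ → ℂ,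
      (∀ s, Differentiable ℂ (ξ s)) ∧
      ξ 0 = (fun _ => 1) ∧
      (∀ s, 1 ≤ s → ξ s x0 = 0) ∧
      (∀ (s : ℤ) (x : ℂ), applyL n u (extSeq ξ) s x = extSeq ξ (s + n) x) := by
  have hnne : (n : ℂ) ≠ 0 := Nat.cast_ne_zero.mpr (by omega)
  have hdiff : ∀ m, Differentiable ℂ (xiSeq n u x0 m) := by
    intro m
    induction m using Nat.strong_induction_on with
    | _ m ih =>
      cases m with
      | zero => rw [xiSeq_zero]; exact differentiable_const 1
      | succ m =>
        rw [xiSeq_succ]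
        exact (primFun_spec (Differentiable.const_mul
          (applyL_diff n u hu (entz_famm m (fun j hj => ih j (by omega))) _) _) x0).1
  have hprim : ∀ m : ℕ, Differentiable ℂ (xiSeq n u x0 (m+1)) ∧
      (∀ x, deriv (xiSeq n u x0 (m+1)) x
        = -(1 / (n:ℂ)) * applyL n u (famm (xiSeq n u x0) m) ((m:ℤ) + 2 - n) x) ∧
      xiSeq n u x0 (m+1) x0 = 0 := by
    intro m
    rw [xiSeq_succ]
    exact primFun_spec (Differentiable.const_mul
      (applyL_diff n u hu (entz_famm m (fun j _ => hdiff j)) _) _) x0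
  have core : ∀ (s : ℤ) (x : ℂ),
      (n:ℂ) * deriv (extSeq (xiSeq n u x0) (s + n - 1)) x
        + applyL n u (lowFam (xiSeq n u x0) (s + n - 1)) s x = 0 := by
    intro s x
    set c : ℤ := s + n - 1 with hc
    by_cases hc0 : c ≤ 0
    · have hder : deriv (extSeq (xiSeq n u x0) c) x = 0 := by
        rcases lt_or_eq_of_le hc0 with h | h
        · have he : extSeq (xiSeq n u x0) c = fun _ => (0:ℂ) := by
            unfold extSeq; rw [if_neg (by omega)]; rfl
          rw [he]; simp
        · have he : extSeq (xiSeq n u x0) c = fun _ => (1:ℂ) := by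
            unfold extSeq
            rw [if_pos (by omega)]
            have h0 : c.toNat = 0 := by omega
            rw [h0, xiSeq_zero]
          rw [he]; simp
      rw [hder, lowFam_neg _ c hc0, applyL_zeroFam]
      ring
    · push_neg at hc0
      obtain ⟨m, hm⟩ : ∃ m : ℕ, c = (m:ℤ) + 1 := ⟨(c - 1).toNat, by omega⟩
      have hs : s = (m:ℤ) + 2 - n := by omega
      have h1 : extSeq (xiSeq n u x0) c = xiSeq n u x0 (m+1) := by
        unfold extSeq
        rw [if_pos (by omega)]
        have ht : c.toNat = m + 1 := by omega
        rw [ht]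
      have h2 : lowFam (xiSeq n u x0) c = famm (xiSeq n u x0) m := by
        rw [famm_eq_lowFam, ← hm]
      rw [h1, h2, (hprim m).2.1 x, hs]
      field_simp
      ring
  refine ⟨xiSeq n u x0, ⟨hdiff, xiSeq_zero n u x0, ?_, ?_⟩, ?_⟩
  · intro s hs
    cases s with
    | zero => omega
    | succ m => exact (hprim m).2.2
  · intro s x
    rw [key_split n u _ hdiff s x]
    have hc := core s x
    linear_combination hc
  · rintro ξ' ⟨hd', h0', hn0', heq'⟩
    have hall : ∀ m, ξ' m = xiSeq n u x0 m := by
      intro m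
      induction m using Nat.strong_induction_on with
      | _ m ih =>
        cases m with
        | zero => rw [h0', xiSeq_zero]
        | succ m =>
          have hidx : ((m:ℤ) + 2 - n) + n - 1 = (m:ℤ) + 1 := by ring
          have hc' : ∀ x : ℂ, (n:ℂ) * deriv (extSeq ξ' ((m:ℤ) + 1)) x
              + applyL n u (lowFam ξ' ((m:ℤ) + 1)) ((m:ℤ) + 2 - n) x = 0 := by
            intro x
            have hk := key_split n u ξ' hd' ((m:ℤ) + 2 - n) x
            have he := heq' ((m:ℤ) + 2 - n) x
            rw [hidx] at hk
            have hidx2 : ((m:ℤ) + 2 - n) + n = (m:ℤ) + 2 := by ring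
            rw [hidx2] at hk he
            linear_combination he - hk
          have hc2 := core ((m:ℤ) + 2 - n)
          rw [hidx] at hc2
          have hlow : lowFam ξ' ((m:ℤ) + 1) = lowFam (xiSeq n u x0) ((m:ℤ) + 1) := by
            funext t
            unfold lowFam extSeq
            split_ifs with ht1 ht2
            · rw [ih t.toNat (by omega)]
            · rfl
            · rfl
          have hE' : extSeq ξ' ((m:ℤ) + 1) = ξ' (m+1) := by
            unfold extSeq
            rw [if_pos (by omega)]
            have : ((m:ℤ) + 1).toNat = m + 1 := by omega
            rw [this]
          have hE : extSeq (xiSeq n u x0) ((m:ℤ) + 1) = xiSeq n u x0 (m+1) := by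
            unfold extSeq
            rw [if_pos (by omega)]
            have : ((m:ℤ) + 1).toNat = m + 1 := by omega
            rw [this]
          have hder : ∀ x, deriv (ξ' (m+1)) x = deriv (xiSeq n u x0 (m+1)) x := by
            intro x
            have e1 := hc' x
            have e2 := hc2 x
            rw [hlow, hE'] at e1
            rw [hE] at e2
            have hmm : (n:ℂ) * deriv (ξ' (m+1)) x
                = (n:ℂ) * deriv (xiSeq n u x0 (m+1)) x := by
              linear_combination e1 - e2
            exact mul_left_cancel₀ hnne hmm
          exact eq_of_deriv_eq_of_eq_at (hd' (m+1)) (hdiff (m+1)) hder x0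
            (by rw [hn0' (m+1) (by omega), (hprim m).2.2])
    funext m
    rw [hall m]
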